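/- Let T be a string of length t and let k ≥ 0 be an integer. Suppose u₁ ≤ u₂ are both lengths of borders of T with t ≤ 2^{k+1}·u_i and 2^k·u_i ≤ t for i = 1, 2 (i.e. both lie in the interval [t/2^{k+1}, t/2^k]). If the length-u₂ prefix of T is a cover of T, then the length-u₁ prefix of T is also a cover of T. -/

import Mathlib

/-- `C` occurs at position `p` in `T`. -/
def Occurs {α : Type*} (C T : List α) (p : ℕ) : Prop :=
  p + C.length ≤ T.length ∧ ∀ i < C.length, T[p + i]? = C[i]?

/-- `C` is a cover of `T`. -/
def IsCover {α : Type*} (C T : List α) : Prop :=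
  ∀ i < T.length, ∃ p, Occurs C T p ∧ p ≤ i ∧ i < p + C.length

/-- `T` has a border of length `u`: the length-`u` prefix equals the length-`u` suffix. -/
def HasBorder {α : Type*} (T : List α) (u : ℕ) : Prop :=
  u ≤ T.length ∧ T.take u = T.drop (T.length - u)

/-- If `u₁ ≤ u₂` are both lengths of borders of `T` lying in the interval
`[t/2^{k+1}, t/2^k]` and the length-`u₂` prefix is a cover of `T`,
then the length-`u₁` prefix is also a cover of `T`. -/
theorem stmt_10 {α : Type*} (T : List α) (k u₁ u₂ : ℕ) (h12 : u₁ ≤ u₂)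
    (hb1 : HasBorder T u₁) (hb2 : HasBorder T u₂)
    (h1a : T.length ≤ 2 ^ (k + 1) * u₁) (h1b : 2 ^ k * u₁ ≤ T.length)
    (h2a : T.length ≤ 2 ^ (k + 1) * u₂) (h2b : 2 ^ k * u₂ ≤ T.length)
    (hcov : IsCover (T.take u₂) T) :
    IsCover (T.take u₁) T := by
  set t := T.length with ht
  obtain ⟨hu1t, hbeq1⟩ := hb1
  obtain ⟨hu2t, hbeq2⟩ := hb2
  -- u₂ ≤ 2 * u₁
  have h2u : u₂ ≤ 2 * u₁ := by
    have hpos : 0 < 2 ^ k := Nat.pow_pos (by norm_num)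
    have : 2 ^ k * u₂ ≤ 2 ^ k * (2 * u₁) := by
      calc 2 ^ k * u₂ ≤ t := h2b
        _ ≤ 2 ^ (k + 1) * u₁ := h1a
        _ = 2 ^ k * (2 * u₁) := by ring
    exact Nat.le_of_mul_le_mul_left this hpos
  have hlen1 : (T.take u₁).length = u₁ := by simp [List.length_take, Nat.min_eq_left hu1t]
  have hlen2 : (T.take u₂).length = u₂ := by simp [List.length_take, Nat.min_eq_left hu2t]
  -- key: T[u₂ - u₁ + i]? = T[i]? for i < u₁
  have key : ∀ i, i < u₁ → T[u₂ - u₁ + i]? = T[i]? := by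
    intro i hi
    have e1 : T[i]? = T[t - u₁ + i]? := by
      have := congrArg (fun l => l[i]?) hbeq1
      simpa [List.getElem?_take_of_lt hi, List.getElem?_drop] using this
    have e2 : T[u₂ - u₁ + i]? = T[t - u₂ + (u₂ - u₁ + i)]? := by
      have := congrArg (fun l => l[u₂ - u₁ + i]?) hbeq2
      have hlt : u₂ - u₁ + i < u₂ := by omega
      simpa [List.getElem?_take_of_lt hlt, List.getElem?_drop] using this
    have e3 : t - u₂ + (u₂ - u₁ + i) = t - u₁ + i := by omega
    rw [e2, e3, ← e1]
  intro i hi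
  obtain ⟨p, ⟨hplen, hpocc⟩, hpi, hip⟩ := hcov i hi
  rw [hlen2] at hplen hpocc hip
  by_cases hc : i < p + u₁
  · refine ⟨p, ⟨?_, ?_⟩, hpi, ?_⟩
    · rw [hlen1]; omega
    · intro j hj
      rw [hlen1] at hj
      rw [hpocc j (lt_of_lt_of_le hj h12), List.getElem?_take_of_lt (lt_of_lt_of_le hj h12),
        List.getElem?_take_of_lt hj]
    · rw [hlen1]; exact hc
  · refine ⟨p + (u₂ - u₁), ⟨?_, ?_⟩, ?_, ?_⟩
    · rw [hlen1]; omega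
    · intro j hj
      rw [hlen1] at hj
      have h1 : p + (u₂ - u₁) + j = p + (u₂ - u₁ + j) := by omega
      have h2 : u₂ - u₁ + j < u₂ := by omega
      rw [h1, hpocc _ h2, List.getElem?_take_of_lt h2, key j hj, List.getElem?_take_of_lt hj]
    · omega
    · rw [hlen1]; omega
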